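/- arXiv:2210.00430 — 6 statements merged into one kernel-verified Lean document; each statement's English description precedes it below -/
import Mathlib

section
/- With P = Wᵀ W + σ² I_q (which equals Λ_q and is invertible), the matrix (W P⁻¹ Wᵀ) Σ (W P⁻¹ Wᵀ)ᵀ equals U Λ′ Uᵀ, where Λ′ is the d×d diagonal matrix whose i-th diagonal entry is (λ_i − σ²)²/λ_i for 1 ≤ i ≤ q and 0 for q < i ≤ d. (This is the covariance of the encode–decode map of P-PCA generative adversarial examples, strategy 1.) -/
open Matrix

private lemma diag_assoc {n : Type*} {m : Type*} [Fintype n] [DecidableEq n]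
    (a b : n → ℝ) (X : Matrix n m ℝ) :
    Matrix.diagonal a * (Matrix.diagonal b * X) =
      Matrix.diagonal (fun i => a i * b i) * X := by
  rw [← Matrix.mul_assoc, Matrix.diagonal_mul_diagonal]

/-- Strategy 1 (encode–decode) covariance of P-PCA generative adversarial examples:
`P = Wᵀ W + σ² I_q` equals `Λ_q` and is invertible, and
`(W P⁻¹ Wᵀ) Σ (W P⁻¹ Wᵀ)ᵀ = U Λ' Uᵀ` with `Λ'` diagonal with entries
`(λ_i − σ²)²/λ_i` for `i ≤ q` and `0` otherwise. -/
theorem strategy1_covariance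
    (d q : ℕ) (hd : 1 ≤ d) (hq1 : 1 ≤ q) (hqd : q ≤ d)
    (U : Matrix (Fin d) (Fin d) ℝ)
    (hU : U * Uᵀ = 1 ∧ Uᵀ * U = 1)
    (lam : Fin d → ℝ)
    (hlam_pos : ∀ i, 0 < lam i)
    (hlam_anti : ∀ i j : Fin d, i ≤ j → lam j ≤ lam i)
    (σ2 : ℝ) (hσ2_nonneg : 0 ≤ σ2)
    (hσ2_lt : σ2 < lam ⟨q - 1, by omega⟩)
    (Sig : Matrix (Fin d) (Fin d) ℝ)
    (hSig : Sig = U * diagonal lam * Uᵀ)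
    (Uq : Matrix (Fin d) (Fin q) ℝ)
    (hUq : ∀ i j, Uq i j = U i (Fin.castLE hqd j))
    (W : Matrix (Fin d) (Fin q) ℝ)
    (hW : W = Uq * diagonal (fun j : Fin q => Real.sqrt (lam (Fin.castLE hqd j) - σ2)))
    (P : Matrix (Fin q) (Fin q) ℝ)
    (hP : P = Wᵀ * W + σ2 • (1 : Matrix (Fin q) (Fin q) ℝ)) :
    P = diagonal (fun j : Fin q => lam (Fin.castLE hqd j)) ∧
    IsUnit P ∧
    (W * P⁻¹ * Wᵀ) * Sig * (W * P⁻¹ * Wᵀ)ᵀ =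
      U * diagonal (fun i : Fin d => if (i : ℕ) < q then (lam i - σ2) ^ 2 / lam i else 0) * Uᵀ := by
  obtain ⟨hU1, hU2⟩ := hU
  set e : Fin q → Fin d := Fin.castLE hqd with he
  have einj : Function.Injective e := Fin.castLE_injective hqd
  -- positivity facts
  have hpos : ∀ j : Fin q, 0 < lam (e j) - σ2 := by
    intro j
    have h1 : lam (⟨q - 1, by omega⟩ : Fin d) ≤ lam (e j) := by
      apply hlam_anti
      have : (j : ℕ) ≤ q - 1 := by omega
      simpa [he, Fin.le_def] using this
    linarith
  have hlam_ne : ∀ j : Fin q, lam (e j) ≠ 0 := fun j => (hlam_pos (e j)).ne'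
  -- Uqᵀ Uq = 1
  have hUqUq : Uqᵀ * Uq = 1 := by
    ext j j'
    have h := congrFun (congrFun hU2 (e j)) (e j')
    simp only [Matrix.mul_apply, Matrix.transpose_apply] at h
    simp only [Matrix.mul_apply, Matrix.transpose_apply, hUq]
    rw [h]
    simp [Matrix.one_apply, einj.eq_iff]
  -- Wᵀ W
  have hsq : ∀ j : Fin q,
      Real.sqrt (lam (e j) - σ2) * Real.sqrt (lam (e j) - σ2) = lam (e j) - σ2 :=
    fun j => Real.mul_self_sqrt (le_of_lt (hpos j))
  have hWW : Wᵀ * W = diagonal (fun j => lam (e j) - σ2) := by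
    rw [hW, Matrix.transpose_mul, Matrix.diagonal_transpose, Matrix.mul_assoc,
      ← Matrix.mul_assoc Uqᵀ, hUqUq, Matrix.one_mul, Matrix.diagonal_mul_diagonal]
    exact congrArg Matrix.diagonal (funext hsq)
  -- P = Λ_q
  have hPd : P = diagonal (fun j : Fin q => lam (e j)) := by
    rw [hP, hWW, Matrix.smul_one_eq_diagonal, Matrix.diagonal_add]
    exact congrArg Matrix.diagonal (funext fun j => by ring)
  -- P invertible
  have hPunit : IsUnit P := by
    rw [Matrix.isUnit_iff_isUnit_det, hPd, Matrix.det_diagonal]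
    exact isUnit_iff_ne_zero.mpr (Finset.prod_ne_zero_iff.mpr fun j _ => hlam_ne j)
  have hPinv : P⁻¹ = diagonal (fun j => (lam (e j))⁻¹) := by
    apply Matrix.inv_eq_right_inv
    rw [hPd, Matrix.diagonal_mul_diagonal, ← Matrix.diagonal_one]
    exact congrArg Matrix.diagonal (funext fun j => mul_inv_cancel₀ (hlam_ne j))
  -- the middle matrix M = W P⁻¹ Wᵀ
  have hM : W * P⁻¹ * Wᵀ =
      Uq * diagonal (fun j => Real.sqrt (lam (e j) - σ2) *
        ((lam (e j))⁻¹ * Real.sqrt (lam (e j) - σ2))) * Uqᵀ := by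
    rw [hW, hPinv, Matrix.transpose_mul, Matrix.diagonal_transpose]
    simp only [Matrix.mul_assoc, diag_assoc]
  set m : Fin q → ℝ := fun j => Real.sqrt (lam (e j) - σ2) *
      ((lam (e j))⁻¹ * Real.sqrt (lam (e j) - σ2)) with hm
  -- Uqᵀ Sig Uq
  have hB : Uᵀ * Uq = Matrix.of (fun i (j : Fin q) => if i = e j then (1 : ℝ) else 0) := by
    ext i j
    have h := congrFun (congrFun hU2 i) (e j)
    simp only [Matrix.mul_apply, Matrix.transpose_apply] at h
    simp only [Matrix.mul_apply, Matrix.transpose_apply, hUq, Matrix.of_apply]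
    rw [h, Matrix.one_apply]
  have hmid : Uqᵀ * Sig * Uq = diagonal (fun j => lam (e j)) := by
    have h1 : Uqᵀ * (U * diagonal lam * Uᵀ) * Uq =
        (Uᵀ * Uq)ᵀ * diagonal lam * (Uᵀ * Uq) := by
      rw [Matrix.transpose_mul, Matrix.transpose_transpose]
      simp only [Matrix.mul_assoc]
    rw [hSig, h1, hB]
    ext j j'
    conv_lhs => rw [Matrix.mul_apply]
    simp only [Matrix.mul_diagonal, Matrix.transpose_apply, Matrix.of_apply]
    rw [Finset.sum_eq_single (e j)]
    · simp [Matrix.diagonal_apply, einj.eq_iff]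
    · intro i _ hne
      simp [hne]
    · intro h
      exact absurd (Finset.mem_univ _) h
  -- restriction of sums
  have sum_restrict : ∀ F : Fin d → ℝ, (∀ i : Fin d, ¬ (i : ℕ) < q → F i = 0) →
      ∑ i, F i = ∑ j : Fin q, F (e j) := by
    intro F hF
    refine ((Finset.sum_subset (Finset.subset_univ
      (Finset.univ.map ⟨e, einj⟩)) ?_).symm).trans ?_
    · intro x _ hx
      apply hF
      intro hlt
      exact hx (Finset.mem_map.mpr ⟨⟨(x : ℕ), hlt⟩, Finset.mem_univ _, Fin.ext (by simp [he])⟩)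
    · rw [Finset.sum_map]
      rfl
  -- pushing a q-diagonal to a d-diagonal
  have hpush : ∀ g : Fin q → ℝ,
      Uq * diagonal g * Uqᵀ =
        U * diagonal (fun i : Fin d => if h : (i : ℕ) < q then g ⟨(i : ℕ), h⟩ else 0) * Uᵀ := by
    intro g
    ext i k
    conv_lhs => rw [Matrix.mul_apply]
    conv_rhs => rw [Matrix.mul_apply]
    simp only [Matrix.mul_diagonal, Matrix.transpose_apply, hUq]
    have hr : ∑ i' : Fin d,
        U i i' * (if h : (i' : ℕ) < q then g ⟨(i' : ℕ), h⟩ else 0) * U k i' =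
        ∑ j : Fin q,
        U i (e j) * (if h : ((e j : Fin d) : ℕ) < q then g ⟨((e j : Fin d) : ℕ), h⟩ else 0)
          * U k (e j) := by
      apply sum_restrict
      intro i' hi'
      rw [dif_neg hi']
      ring
    rw [hr]
    refine Finset.sum_congr rfl fun j _ => ?_
    have hj : ((e j : Fin d) : ℕ) < q := by simpa [he] using j.isLt
    rw [dif_pos hj]
    congr 2 <;> exact Fin.ext (by simp [he])
  -- final computation
  refine ⟨hPd, hPunit, ?_⟩
  have hMt : (Uq * diagonal m * Uqᵀ)ᵀ = Uq * diagonal m * Uqᵀ := by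
    simp [Matrix.transpose_mul, Matrix.transpose_transpose, Matrix.diagonal_transpose,
      Matrix.mul_assoc]
  have h1 : Uq * diagonal m * Uqᵀ * Sig * (Uq * diagonal m * Uqᵀ) =
      Uq * (diagonal m * ((Uqᵀ * Sig * Uq) * (diagonal m * Uqᵀ))) := by
    simp only [Matrix.mul_assoc]
  rw [hM, hMt, h1, hmid]
  simp only [diag_assoc]
  rw [← Matrix.mul_assoc, hpush]
  have hfun : (fun i : Fin d => if h : (i : ℕ) < q then
        m ⟨(i : ℕ), h⟩ * (lam (e ⟨(i : ℕ), h⟩) * m ⟨(i : ℕ), h⟩) else 0)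
      = fun i : Fin d => if (i : ℕ) < q then (lam i - σ2) ^ 2 / lam i else 0 := by
    funext i
    by_cases h : (i : ℕ) < q
    · rw [dif_pos h, if_pos h]
      have hei : e ⟨(i : ℕ), h⟩ = i := Fin.ext (by simp [he])
      have hb : lam i ≠ 0 := (hlam_pos i).ne'
      have hp : 0 < lam i - σ2 := by
        have := hpos ⟨(i : ℕ), h⟩
        rwa [hei] at this
      have ha : Real.sqrt (lam i - σ2) * Real.sqrt (lam i - σ2) = lam i - σ2 :=
        Real.mul_self_sqrt hp.le
      simp only [hm]
      rw [hei, eq_div_iff hb, ← ha]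
      rw [Real.sqrt_mul_self (Real.sqrt_nonneg _)]
      field_simp
    · rw [dif_neg h, if_neg h]
  rw [hfun]
end

section
/- Let Σ be a positive definite d×d real matrix, W a d×q real matrix, μ, x′ ∈ ℝ^d, and L a real number such that L·I_q − Wᵀ Σ⁻¹ W is positive definite and L·Σ − W Wᵀ is invertible. Then the function Δz ↦ ℓ(x′ + W Δz; μ, Σ) − (L/2)·‖Δz‖² on ℝ^q (with ‖·‖ the Euclidean norm) attains its unique global maximum at Δz* = Wᵀ (L·Σ − W Wᵀ)⁻¹ (x′ − μ). -/
open Matrix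

/-- Gaussian negative log-likelihood
`ℓ(x; μ, Σ) = (d/2) log(2π) + (1/2) log det Σ + (1/2) (x − μ)ᵀ Σ⁻¹ (x − μ)`. -/
noncomputable def negLogLik {d : ℕ} (Sig : Matrix (Fin d) (Fin d) ℝ)
    (mu x : Fin d → ℝ) : ℝ :=
  (d : ℝ) / 2 * Real.log (2 * Real.pi) + 1 / 2 * Real.log Sig.det +
    1 / 2 * ((x - mu) ⬝ᵥ (Sig⁻¹ *ᵥ (x - mu)))

/-- Optimal on-manifold perturbation: if `L I_q − Wᵀ Σ⁻¹ W` is positive definite and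
`L Σ − W Wᵀ` is invertible, then `Δz ↦ ℓ(x′ + W Δz; μ, Σ) − (L/2) ‖Δz‖²`
attains its unique global maximum at `Δz* = Wᵀ (L Σ − W Wᵀ)⁻¹ (x′ − μ)`. -/
theorem optimal_generative_perturbation
    (d q : ℕ) (hd : 1 ≤ d) (hq : 1 ≤ q)
    (Sig : Matrix (Fin d) (Fin d) ℝ) (hSig : Sig.PosDef)
    (W : Matrix (Fin d) (Fin q) ℝ) (mu x' : Fin d → ℝ) (L : ℝ)
    (hL : (L • (1 : Matrix (Fin q) (Fin q) ℝ) - Wᵀ * Sig⁻¹ * W).PosDef)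
    (hInv : IsUnit (L • Sig - W * Wᵀ))
    (Δzstar : Fin q → ℝ)
    (hΔzstar : Δzstar = (Wᵀ * (L • Sig - W * Wᵀ)⁻¹) *ᵥ (x' - mu)) :
    ∀ Δz : Fin q → ℝ, Δz ≠ Δzstar →
      negLogLik Sig mu (x' + W *ᵥ Δz) - L / 2 * ∑ i, Δz i ^ 2 <
        negLogLik Sig mu (x' + W *ᵥ Δzstar) - L / 2 * ∑ i, Δzstar i ^ 2 := by
  intro Δz hne
  set A := Sig⁻¹ with hAdef
  set B := L • Sig - W * Wᵀ with hBdef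
  set v := x' - mu with hvdef
  set h : Fin q → ℝ := Δz - Δzstar with hhdef
  have hAsym : Aᵀ = A := by
    have hH := hSig.inv.isHermitian
    rw [Matrix.IsHermitian, Matrix.conjTranspose_eq_transpose_of_trivial] at hH
    exact hH
  -- symmetry of the quadratic form
  have symAux : ∀ a b : Fin d → ℝ, a ⬝ᵥ (A *ᵥ b) = b ⬝ᵥ (A *ᵥ a) := by
    intro a b
    rw [Matrix.dotProduct_mulVec, ← Matrix.mulVec_transpose, hAsym, dotProduct_comm]
  have cross : ∀ (hv : Fin q → ℝ) (w : Fin d → ℝ),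
      (W *ᵥ hv) ⬝ᵥ w = hv ⬝ᵥ (Wᵀ *ᵥ w) := by
    intro hv w
    rw [dotProduct_comm, Matrix.dotProduct_mulVec, ← Matrix.mulVec_transpose, dotProduct_comm]
  -- matrix identities
  have hSigInv : A * Sig = 1 := Matrix.nonsing_inv_mul Sig hSig.det_pos.ne'.isUnit
  have hB : B * B⁻¹ = 1 :=
    Matrix.mul_nonsing_inv _ ((Matrix.isUnit_iff_isUnit_det _).mp hInv)
  have h1 : Wᵀ * A * B = (L • (1 : Matrix (Fin q) (Fin q) ℝ) - Wᵀ * A * W) * Wᵀ := by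
    rw [hBdef]
    rw [Matrix.mul_sub, Matrix.sub_mul, Matrix.mul_smul, Matrix.smul_mul]
    rw [Matrix.mul_assoc Wᵀ A Sig, hSigInv, Matrix.mul_one, Matrix.one_mul,
      ← Matrix.mul_assoc]
  have hmat : (L • (1 : Matrix (Fin q) (Fin q) ℝ) - Wᵀ * A * W) * (Wᵀ * B⁻¹) = Wᵀ * A := by
    calc (L • (1 : Matrix (Fin q) (Fin q) ℝ) - Wᵀ * A * W) * (Wᵀ * B⁻¹)
        = ((L • (1 : Matrix (Fin q) (Fin q) ℝ) - Wᵀ * A * W) * Wᵀ) * B⁻¹ := by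
          simp only [Matrix.mul_assoc]
      _ = (Wᵀ * A * B) * B⁻¹ := by rw [h1]
      _ = Wᵀ * A * (B * B⁻¹) := by rw [Matrix.mul_assoc]
      _ = Wᵀ * A := by rw [hB, Matrix.mul_one]
  -- stationarity
  have hstat : (Wᵀ * A) *ᵥ (v + W *ᵥ Δzstar) = L • Δzstar := by
    have h2 : (L • (1 : Matrix (Fin q) (Fin q) ℝ) - Wᵀ * A * W) *ᵥ Δzstar = (Wᵀ * A) *ᵥ v := by
      rw [hΔzstar, Matrix.mulVec_mulVec, hmat]
    have h3 : (Wᵀ * A) *ᵥ (v + W *ᵥ Δzstar)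
        = (L • (1 : Matrix (Fin q) (Fin q) ℝ) - Wᵀ * A * W) *ᵥ Δzstar
          + (Wᵀ * A * W) *ᵥ Δzstar := by
      rw [Matrix.mulVec_add, h2, Matrix.mulVec_mulVec]
    rw [h3, Matrix.sub_mulVec, sub_add_cancel, Matrix.smul_mulVec, Matrix.one_mulVec]
  -- scalar facts
  set ustar : Fin d → ℝ := v + W *ᵥ Δzstar with hustar
  have hz : Δz = Δzstar + h := by simp [hhdef]
  have e1 : (v + W *ᵥ Δz) ⬝ᵥ (A *ᵥ (v + W *ᵥ Δz))
      = ustar ⬝ᵥ (A *ᵥ ustar) + 2 * (L * (h ⬝ᵥ Δzstar)) + h ⬝ᵥ ((Wᵀ * A * W) *ᵥ h) := by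
    have hu : v + W *ᵥ Δz = ustar + W *ᵥ h := by
      rw [hz, Matrix.mulVec_add, hustar, add_assoc]
    have c1 : (W *ᵥ h) ⬝ᵥ (A *ᵥ ustar) = L * (h ⬝ᵥ Δzstar) := by
      rw [cross, Matrix.mulVec_mulVec, hstat, dotProduct_smul, smul_eq_mul]
    have c2 : ustar ⬝ᵥ (A *ᵥ (W *ᵥ h)) = L * (h ⬝ᵥ Δzstar) := by
      rw [symAux, c1]
    have c3 : (W *ᵥ h) ⬝ᵥ (A *ᵥ (W *ᵥ h)) = h ⬝ᵥ ((Wᵀ * A * W) *ᵥ h) := by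
      rw [cross, Matrix.mulVec_mulVec, Matrix.mulVec_mulVec]
    rw [hu]
    simp only [Matrix.mulVec_add, dotProduct_add, add_dotProduct, c1, c2, c3]
    ring
  have e2 : Δz ⬝ᵥ Δz = Δzstar ⬝ᵥ Δzstar + 2 * (h ⬝ᵥ Δzstar) + h ⬝ᵥ h := by
    rw [hz, dotProduct_add, add_dotProduct, add_dotProduct,
      dotProduct_comm Δzstar h]
    ring
  have e3 : h ⬝ᵥ ((L • (1 : Matrix (Fin q) (Fin q) ℝ) - Wᵀ * A * W) *ᵥ h)
      = L * (h ⬝ᵥ h) - h ⬝ᵥ ((Wᵀ * A * W) *ᵥ h) := by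
    rw [Matrix.sub_mulVec, dotProduct_sub, Matrix.smul_mulVec, Matrix.one_mulVec,
      dotProduct_smul, smul_eq_mul]
  have hpos : 0 < h ⬝ᵥ ((L • (1 : Matrix (Fin q) (Fin q) ℝ) - Wᵀ * A * W) *ᵥ h) := by
    have hh0 : h ≠ 0 := sub_ne_zero.mpr hne
    simpa [star_trivial] using (Matrix.posDef_iff_dotProduct_mulVec.mp hL).2 hh0
  -- sums as dot products
  have s1 : ∑ i, Δz i ^ 2 = Δz ⬝ᵥ Δz := by simp [dotProduct, sq]
  have s2 : ∑ i, Δzstar i ^ 2 = Δzstar ⬝ᵥ Δzstar := by simp [dotProduct, sq]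
  have hx1 : x' + W *ᵥ Δz - mu = v + W *ᵥ Δz := by
    rw [hvdef]; funext i; simp; ring
  have hx2 : x' + W *ᵥ Δzstar - mu = ustar := by
    rw [hustar, hvdef]; funext i; simp; ring
  simp only [negLogLik, s1, s2, hx1, hx2, ← hAdef]
  rw [e1, e2]
  nlinarith [hpos, e3]
end

section
/- Let Σ be a positive definite d×d real matrix, μ, x ∈ ℝ^d, and L a real number such that L·I_d − Σ⁻¹ is positive definite (so L·Σ − I_d is invertible). Then the function Δx ↦ ℓ(x + Δx; μ, Σ) − (L/2)·‖Δx‖² on ℝ^d (with ‖·‖ the Euclidean norm) attains its unique global maximum at Δx* = (L·Σ − I_d)⁻¹ (x − μ). -/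
open Matrix

private lemma symm_dot {d : ℕ} {A : Matrix (Fin d) (Fin d) ℝ} (hA : A.IsHermitian)
    (a b : Fin d → ℝ) : a ⬝ᵥ (A *ᵥ b) = b ⬝ᵥ (A *ᵥ a) := by
  rw [Matrix.dotProduct_mulVec, ← Matrix.mulVec_transpose, dotProduct_comm]
  congr 1
  rw [show Aᵀ = A from hA]

/-- Optimal regular (full-space) perturbation: if `L I_d − Σ⁻¹` is positive definite,
then `L Σ − I_d` is invertible and `Δx ↦ ℓ(x + Δx; μ, Σ) − (L/2) ‖Δx‖²`
attains its unique global maximum at `Δx* = (L Σ − I_d)⁻¹ (x − μ)`. -/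
theorem optimal_regular_perturbation
    (d : ℕ) (hd : 1 ≤ d)
    (Sig : Matrix (Fin d) (Fin d) ℝ) (hSig : Sig.PosDef)
    (mu x : Fin d → ℝ) (L : ℝ)
    (hL : (L • (1 : Matrix (Fin d) (Fin d) ℝ) - Sig⁻¹).PosDef)
    (Δxstar : Fin d → ℝ)
    (hΔxstar : Δxstar = (L • Sig - (1 : Matrix (Fin d) (Fin d) ℝ))⁻¹ *ᵥ (x - mu)) :
    IsUnit (L • Sig - (1 : Matrix (Fin d) (Fin d) ℝ)) ∧
    ∀ Δx : Fin d → ℝ, Δx ≠ Δxstar →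
      negLogLik Sig mu (x + Δx) - L / 2 * ∑ i, Δx i ^ 2 <
        negLogLik Sig mu (x + Δxstar) - L / 2 * ∑ i, Δxstar i ^ 2 := by
  set A := Sig⁻¹ with hAdef
  have hA : A.PosDef := hSig.inv
  set M := L • (1 : Matrix (Fin d) (Fin d) ℝ) - A with hMdef
  have hSu : IsUnit Sig.det := isUnit_iff_ne_zero.mpr hSig.det_pos.ne'
  have hMu : IsUnit M.det := isUnit_iff_ne_zero.mpr hL.det_pos.ne'
  have hMunit : IsUnit M := (Matrix.isUnit_iff_isUnit_det M).mpr hMu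
  have hMSig : M * Sig = L • Sig - 1 := by
    rw [hMdef, Matrix.sub_mul, Matrix.smul_mul, Matrix.one_mul, hAdef,
      Matrix.nonsing_inv_mul _ hSu]
  have hUnit : IsUnit (L • Sig - (1 : Matrix (Fin d) (Fin d) ℝ)) := by
    rw [← hMSig]
    exact hMunit.mul ((Matrix.isUnit_iff_isUnit_det Sig).mpr hSu)
  refine ⟨hUnit, ?_⟩
  set v := x - mu with hv
  set s := Δxstar with hs
  have hLSu : IsUnit (L • Sig - (1 : Matrix (Fin d) (Fin d) ℝ)).det :=
    (Matrix.isUnit_iff_isUnit_det _).mp hUnit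
  have h1 : (L • Sig - 1) *ᵥ s = v := by
    rw [hΔxstar, Matrix.mulVec_mulVec, Matrix.mul_nonsing_inv _ hLSu, Matrix.one_mulVec]
  have hAM : A * (L • Sig - 1) = M := by
    rw [Matrix.mul_sub, Matrix.mul_smul, Matrix.mul_one, hAdef,
      Matrix.nonsing_inv_mul _ hSu, hMdef]
  have hMs : M *ᵥ s = A *ᵥ v := by
    rw [← h1, Matrix.mulVec_mulVec, hAM]
  intro Δx hΔ
  set w := Δx - s with hwdef
  have hw0 : w ≠ 0 := sub_ne_zero.mpr hΔ
  have hpos : 0 < w ⬝ᵥ (M *ᵥ w) := by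
    have := hL.dotProduct_mulVec_pos hw0
    simpa [hMdef] using this
  have hΔeq : Δx = s + w := by rw [hwdef]; ring
  -- M *ᵥ w expansion
  have hMw : w ⬝ᵥ (M *ᵥ w) = L * (w ⬝ᵥ w) - w ⬝ᵥ (A *ᵥ w) := by
    rw [hMdef, Matrix.sub_mulVec, dotProduct_sub, Matrix.smul_mulVec,
      Matrix.one_mulVec, dotProduct_smul, smul_eq_mul]
  have hAsym : A.IsHermitian := hA.1
  have cross : w ⬝ᵥ (A *ᵥ (v + s)) = L * (w ⬝ᵥ s) := by
    rw [Matrix.mulVec_add, dotProduct_add, ← hMs, hMdef, Matrix.sub_mulVec,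
      dotProduct_sub, Matrix.smul_mulVec, Matrix.one_mulVec,
      dotProduct_smul, smul_eq_mul]
    ring
  have expand : (v + Δx) ⬝ᵥ (A *ᵥ (v + Δx)) =
      (v + s) ⬝ᵥ (A *ᵥ (v + s)) + 2 * (w ⬝ᵥ (A *ᵥ (v + s))) + w ⬝ᵥ (A *ᵥ w) := by
    rw [hΔeq, show v + (s + w) = (v + s) + w by ring]
    simp only [Matrix.mulVec_add, dotProduct_add, add_dotProduct]
    rw [symm_dot hAsym v w, symm_dot hAsym s w]
    ring
  have dotexp : Δx ⬝ᵥ Δx = s ⬝ᵥ s + 2 * (w ⬝ᵥ s) + w ⬝ᵥ w := by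
    rw [hΔeq, dotProduct_add, add_dotProduct, add_dotProduct,
      dotProduct_comm s w]
    ring
  have sum1 : ∑ i, Δx i ^ 2 = Δx ⬝ᵥ Δx := by simp [dotProduct, pow_two]
  have sum2 : ∑ i, s i ^ 2 = s ⬝ᵥ s := by simp [dotProduct, pow_two]
  have harg1 : x + Δx - mu = v + Δx := by rw [hv]; ring
  have harg2 : x + s - mu = v + s := by rw [hv]; ring
  simp only [negLogLik, harg1, harg2, sum1, sum2, ← hAdef]
  rw [expand, dotexp, cross]
  nlinarith [hpos, hMw]
end

section
/- Let λ > 0 and L > 0 be real numbers. Then t* = (1/4)·[ 2λ + 4/L + 2λ·√(1 + 4/(λ L)) ] is the unique real number t > 1/L satisfying λ L² t = (L t − 1)², equivalently λ · (1 + 1/(L t − 1))² = t. (Fixed-point characterization of the optimal eigenvalues λ_i^{eat} of eigenspace adversarial training.) -/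
/-- Fixed-point characterization of the optimal eigenvalues `λ_i^{eat}` of eigenspace
adversarial training: for `λ > 0`, `L > 0`,
`t* = (1/4)[2λ + 4/L + 2λ√(1 + 4/(λL))]` is the unique `t > 1/L` with
`λ L² t = (L t − 1)²`, equivalently `λ (1 + 1/(L t − 1))² = t`. -/
theorem eat_eigenvalue_fixed_point
    (lam L : ℝ) (hlam : 0 < lam) (hL : 0 < L)
    (tstar : ℝ)
    (htstar : tstar =
      1 / 4 * (2 * lam + 4 / L + 2 * lam * Real.sqrt (1 + 4 / (lam * L)))) :
    (1 / L < tstar ∧ lam * L ^ 2 * tstar = (L * tstar - 1) ^ 2) ∧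
    (∀ t : ℝ, 1 / L < t → lam * L ^ 2 * t = (L * t - 1) ^ 2 → t = tstar) ∧
    (∀ t : ℝ, 1 / L < t →
      (lam * L ^ 2 * t = (L * t - 1) ^ 2 ↔ lam * (1 + 1 / (L * t - 1)) ^ 2 = t)) := by
  have hLne : L ≠ 0 := ne_of_gt hL
  have hlamL : 0 < lam * L := mul_pos hlam hL
  set s := Real.sqrt (1 + 4 / (lam * L)) with hsdef
  have harg : 0 < 1 + 4 / (lam * L) := by positivity
  have hs2 : s ^ 2 = 1 + 4 / (lam * L) := Real.sq_sqrt harg.le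
  have hs0 : 0 ≤ s := Real.sqrt_nonneg _
  have hs1 : 1 < s := by
    nlinarith [div_pos (by norm_num : (0:ℝ) < 4) hlamL]
  have hs2' : lam * L * s ^ 2 = lam * L + 4 := by
    rw [hs2]; field_simp
  have hts : tstar = lam / 2 + 1 / L + lam * s / 2 := by
    rw [htstar]; ring
  have hu : L * tstar = lam * L / 2 + 1 + lam * L * s / 2 := by
    rw [hts]; field_simp
  have h1 : 1 / L < tstar := by
    rw [hts]; nlinarith
  have hfix : lam * L ^ 2 * tstar = (L * tstar - 1) ^ 2 := by
    have h2 : lam * L * (L * tstar) = (L * tstar - 1) ^ 2 := by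
      rw [hu]; linear_combination (-(lam * L) / 4) * hs2'
    linear_combination h2
  have htsbig : lam + 1 / L < tstar := by
    rw [hts]; nlinarith
  refine ⟨⟨h1, hfix⟩, ?_, ?_⟩
  · intro t ht heq
    have key : (t - tstar) * (L ^ 2 * (t + tstar) - 2 * L - lam * L ^ 2) = 0 := by
      linear_combination hfix - heq
    rcases mul_eq_zero.mp key with h | h
    · linarith [sub_eq_zero.mp h]
    · exfalso
      have hLt : 1 < L * t := by
        have := (div_lt_iff₀ hL).mp ht; nlinarith
      have hLts : 1 + lam * L < L * tstar := by
        have h5 : L * (1 / L) = 1 := by field_simp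
        nlinarith [mul_lt_mul_of_pos_left htsbig hL]
      nlinarith
  · intro t ht
    have ht0 : 0 < t := lt_trans (by positivity) ht
    have hLt : 0 < L * t - 1 := by
      have := (div_lt_iff₀ hL).mp ht; nlinarith
    have hne : L * t - 1 ≠ 0 := ne_of_gt hLt
    constructor
    · intro h
      field_simp
      linear_combination t * h
    · intro h
      field_simp at h
      have h2 : t * (lam * L ^ 2 * t - (L * t - 1) ^ 2) = 0 := by
        linear_combination h
      rcases mul_eq_zero.mp h2 with h3 | h3
      · exact absurd h3 (ne_of_gt ht0)
      · linarith
end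

section
/- Let L > 0 be a real number and for λ > 0 define λ^{eat}(λ) = (1/4)·[ 2λ + 4/L + 2λ·√(1 + 4/(λ L)) ]. Then for every λ > 0, λ^{eat}(λ)/λ = 1/2 + 1/(L λ) + √(1/(L λ) + 1/4), and the function λ ↦ λ^{eat}(λ)/λ is strictly decreasing on (0, ∞). (Eigenspace adversarial training amplifies small eigenvalues more than large ones.) -/
lemma eat_ratio_eq (L : ℝ) (hL : 0 < L) (lam : ℝ) (hlam : 0 < lam) :
    (1 / 4 * (2 * lam + 4 / L + 2 * lam * Real.sqrt (1 + 4 / (lam * L)))) / lam =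
      1 / 2 + 1 / (L * lam) + Real.sqrt (1 / (L * lam) + 1 / 4) := by
  have h4 : (1 : ℝ) / (L * lam) + 1 / 4 = (1 + 4 / (lam * L)) / 4 := by
    field_simp; ring
  have hs : Real.sqrt (1 / (L * lam) + 1 / 4) = Real.sqrt (1 + 4 / (lam * L)) / 2 := by
    rw [h4, Real.sqrt_div (by positivity), show Real.sqrt 4 = 2 by
      rw [show (4:ℝ)=2^2 by norm_num, Real.sqrt_sq (by norm_num)]]
  rw [hs]
  have hne : lam ≠ 0 := ne_of_gt hlam
  have hs0 : Real.sqrt (1 + 4 / (lam * L)) = Real.sqrt (1 + 4 / (lam * L)) := rfl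
  field_simp
  ring

/-- Eigenspace adversarial training amplifies small eigenvalues more than large ones:
for `L > 0` and `λ^{eat}(λ) = (1/4)[2λ + 4/L + 2λ√(1 + 4/(λL))]`, one has
`λ^{eat}(λ)/λ = 1/2 + 1/(Lλ) + √(1/(Lλ) + 1/4)` for all `λ > 0`, and
`λ ↦ λ^{eat}(λ)/λ` is strictly decreasing on `(0, ∞)`. -/
theorem eat_amplification_ratio (L : ℝ) (hL : 0 < L) :
    (∀ lam : ℝ, 0 < lam →
      (1 / 4 * (2 * lam + 4 / L + 2 * lam * Real.sqrt (1 + 4 / (lam * L)))) / lam =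
        1 / 2 + 1 / (L * lam) + Real.sqrt (1 / (L * lam) + 1 / 4)) ∧
    StrictAntiOn
      (fun lam : ℝ =>
        (1 / 4 * (2 * lam + 4 / L + 2 * lam * Real.sqrt (1 + 4 / (lam * L)))) / lam)
      (Set.Ioi 0) := by
  refine ⟨fun lam h => eat_ratio_eq L hL lam h, ?_⟩
  intro a ha b hb hab
  simp only [Set.mem_Ioi] at ha hb
  simp only
  rw [eat_ratio_eq L hL a ha, eat_ratio_eq L hL b hb]
  have h1 : 1 / (L * b) < 1 / (L * a) := by
    apply one_div_lt_one_div_of_lt (by positivity)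
    exact mul_lt_mul_of_pos_left hab hL
  have h2 : Real.sqrt (1 / (L * b) + 1 / 4) < Real.sqrt (1 / (L * a) + 1 / 4) := by
    apply Real.sqrt_lt_sqrt (by positivity)
    linarith
  linarith
end

section
/- Let Σ be a positive definite d×d real matrix, W a d×q real matrix, and L a real number such that L·I_q − Wᵀ Σ⁻¹ W and L·Σ − W Wᵀ are invertible. Then M* = Wᵀ (L·Σ − W Wᵀ)⁻¹ is the unique q×d real matrix M satisfying the stationarity equation Wᵀ Σ⁻¹ + Wᵀ Σ⁻¹ W M − L·M = 0. (Optimal linear perturbation map in the modified min–max problem of generative adversarial training.) -/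
open Matrix

/-- Optimal linear perturbation map in the modified min–max problem of generative
adversarial training: `M* = Wᵀ (L Σ − W Wᵀ)⁻¹` is the unique `q × d` matrix `M`
satisfying the stationarity equation `Wᵀ Σ⁻¹ + Wᵀ Σ⁻¹ W M − L M = 0`. -/
theorem optimal_perturbation_matrix
    (d q : ℕ) (hd : 1 ≤ d) (hq : 1 ≤ q)
    (Sig : Matrix (Fin d) (Fin d) ℝ) (hSig : Sig.PosDef)
    (W : Matrix (Fin d) (Fin q) ℝ) (L : ℝ)
    (h1 : IsUnit (L • (1 : Matrix (Fin q) (Fin q) ℝ) - Wᵀ * Sig⁻¹ * W))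
    (h2 : IsUnit (L • Sig - W * Wᵀ)) :
    (Wᵀ * Sig⁻¹ + Wᵀ * Sig⁻¹ * W * (Wᵀ * (L • Sig - W * Wᵀ)⁻¹) -
        L • (Wᵀ * (L • Sig - W * Wᵀ)⁻¹) = 0) ∧
    (∀ M : Matrix (Fin q) (Fin d) ℝ,
      Wᵀ * Sig⁻¹ + Wᵀ * Sig⁻¹ * W * M - L • M = 0 →
        M = Wᵀ * (L • Sig - W * Wᵀ)⁻¹) := by
  set A : Matrix (Fin q) (Fin q) ℝ := L • (1 : Matrix (Fin q) (Fin q) ℝ) - Wᵀ * Sig⁻¹ * W with hA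
  set B : Matrix (Fin d) (Fin d) ℝ := L • Sig - W * Wᵀ with hB
  have hSigInv : Sig⁻¹ * Sig = 1 := Matrix.nonsing_inv_mul Sig (isUnit_iff_ne_zero.mpr hSig.det_pos.ne')
  have hBinv : B * B⁻¹ = 1 :=
    Matrix.mul_nonsing_inv B ((Matrix.isUnit_iff_isUnit_det B).mp h2)
  have hAinv : A⁻¹ * A = 1 :=
    Matrix.nonsing_inv_mul A ((Matrix.isUnit_iff_isUnit_det A).mp h1)
  -- Key identity: A * Wᵀ = Wᵀ * Sig⁻¹ * B
  have key : A * Wᵀ = Wᵀ * Sig⁻¹ * B := by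
    rw [hA, hB]
    simp only [Matrix.sub_mul, Matrix.mul_sub, Matrix.smul_mul, Matrix.mul_smul,
      Matrix.one_mul]
    rw [show Wᵀ * Sig⁻¹ * Sig = Wᵀ by rw [Matrix.mul_assoc, hSigInv, Matrix.mul_one],
      Matrix.mul_assoc (Wᵀ * Sig⁻¹) W Wᵀ]
  -- A * M* = Wᵀ * Sig⁻¹
  have hAM : A * (Wᵀ * B⁻¹) = Wᵀ * Sig⁻¹ := by
    rw [← Matrix.mul_assoc, key, Matrix.mul_assoc, hBinv, Matrix.mul_one]
  -- the stationarity equation is equivalent to A * M = Wᵀ * Sig⁻¹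
  have hequiv : ∀ M : Matrix (Fin q) (Fin d) ℝ,
      (Wᵀ * Sig⁻¹ + Wᵀ * Sig⁻¹ * W * M - L • M = 0) ↔ A * M = Wᵀ * Sig⁻¹ := by
    intro M
    rw [hA]
    constructor
    · intro h
      have := sub_eq_zero.mp h
      simp only [Matrix.sub_mul, Matrix.smul_mul, Matrix.one_mul]
      rw [eq_comm, sub_eq_iff_eq_add] at *
      rw [this]; abel
    · intro h
      simp only [Matrix.sub_mul, Matrix.smul_mul, Matrix.one_mul] at h
      rw [sub_eq_iff_eq_add] at h ⊢
      rw [← h]; abel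
  refine ⟨(hequiv _).mpr hAM, fun M hM => ?_⟩
  have h := (hequiv M).mp hM
  calc M = A⁻¹ * (A * M) := by rw [← Matrix.mul_assoc, hAinv, Matrix.one_mul]
    _ = A⁻¹ * (A * (Wᵀ * B⁻¹)) := by rw [h, hAM]
    _ = Wᵀ * B⁻¹ := by rw [← Matrix.mul_assoc, hAinv, Matrix.one_mul]
end
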